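/- Let Q̄ be an imprecise probability tree, let E be a global upper expectation satisfying axioms P1–P5 together with P3=, P6 and P7, and let E' be any global upper expectation satisfying P1–P5. Then E(f|s) ≥ E'(f|s) for every global variable f ∈ V̄ and every situation s ∈ 𝒳*. -/
import Mathlib


open Filter MeasureTheory
open scoped Classical ENNReal NNReal

namespace UEP

variable {X : Type*}

/-- The string of the first `n` states of a path `ω`. -/
def pref (ω : ℕ → X) (n : ℕ) : List X := List.ofFn (fun i : Fin n => ω i)

/-- The cylinder event of a situation `s`. -/
def cyl (s : List X) : Set (ℕ → X) := {ω : ℕ → X | pref ω s.length = s}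

/-- `f` depends only on the first `n` states. -/
def NMeas (n : ℕ) (f : (ℕ → X) → EReal) : Prop :=
  ∀ ω₁ ω₂ : ℕ → X, pref ω₁ n = pref ω₂ n → f ω₁ = f ω₂

/-- `f` is bounded below (by a real constant). -/
def IsBddBelow (f : (ℕ → X) → EReal) : Prop := ∃ c : ℝ, ∀ ω, (c : EReal) ≤ f ω

/-- `f` is bounded above (by a real constant). -/
def IsBddAbove (f : (ℕ → X) → EReal) : Prop := ∃ c : ℝ, ∀ ω, f ω ≤ (c : EReal)

/-- `f` is real-valued and bounded. -/
def IsGambleVal (f : (ℕ → X) → EReal) : Prop :=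
  ∃ a b : ℝ, ∀ ω, (a : EReal) ≤ f ω ∧ f ω ≤ (b : EReal)

/-- `f` is an `n`-measurable gamble. -/
def IsNGamble (n : ℕ) (f : (ℕ → X) → EReal) : Prop := NMeas n f ∧ IsGambleVal f

/-- `f` is a finitary gamble. -/
def IsFinitaryGamble (f : (ℕ → X) → EReal) : Prop := (∃ n, NMeas n f) ∧ IsGambleVal f

/-- `f` is finitary. -/
def IsFinitary (f : (ℕ → X) → EReal) : Prop := ∃ n, NMeas n f

/-- pointwise convergence of a sequence of global variables. -/
def PtwLim (fs : ℕ → (ℕ → X) → EReal) (f : (ℕ → X) → EReal) : Prop :=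
  ∀ ω, Tendsto (fun n => fs n ω) atTop (nhds (f ω))

/-- the sequence is uniformly bounded below. -/
def UnifBddBelow (fs : ℕ → (ℕ → X) → EReal) : Prop :=
  ∃ c : ℝ, ∀ n ω, (c : EReal) ≤ fs n ω

/-- `f` belongs to `V̄_{b,lim}`: bounded below and a pointwise limit of finitary gambles. -/
def Vblim (f : (ℕ → X) → EReal) : Prop :=
  IsBddBelow f ∧ ∃ fs : ℕ → (ℕ → X) → EReal,
    (∀ n, IsFinitaryGamble (fs n)) ∧ PtwLim fs f

/-- A coherent upper expectation on the finite state space `X`. -/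
def IsCoherent [Fintype X] (Q : (X → ℝ) → ℝ) : Prop :=
  (∀ f : X → ℝ, Q f ≤ ⨆ x, f x) ∧
  (∀ f g : X → ℝ, Q (fun x => f x + g x) ≤ Q f + Q g) ∧
  (∀ l : ℝ, 0 ≤ l → ∀ f : X → ℝ, Q (fun x => l * f x) = l * Q f)

/-- Axiom P1: compatibility with the local models. -/
def P1 (Q : List X → (X → ℝ) → ℝ) (E : ((ℕ → X) → EReal) → List X → EReal) : Prop :=
  ∀ (s : List X) (f : X → ℝ),
    E (fun ω => (f (ω s.length) : EReal)) s = ((Q s f : ℝ) : EReal)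

/-- Axiom P2. -/
def P2 (E : ((ℕ → X) → EReal) → List X → EReal) : Prop :=
  ∀ f : (ℕ → X) → EReal, IsFinitaryGamble f → ∀ s : List X,
    E f s = E (fun ω => if ω ∈ cyl s then f ω else 0) s

/-- Axiom P3 (inequality form). -/
def P3le (E : ((ℕ → X) → EReal) → List X → EReal) : Prop :=
  ∀ f : (ℕ → X) → EReal, IsFinitaryGamble f → ∀ (n : ℕ) (ω : ℕ → X),
    E f (pref ω n) ≤ E (fun ω' => E f (pref ω' (n + 1))) (pref ω n)

/-- Axiom P3 with equality: the law of iterated upper expectations. -/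
def P3eq (E : ((ℕ → X) → EReal) → List X → EReal) : Prop :=
  ∀ f : (ℕ → X) → EReal, IsFinitaryGamble f → ∀ (n : ℕ) (ω : ℕ → X),
    E f (pref ω n) = E (fun ω' => E f (pref ω' (n + 1))) (pref ω n)

/-- Axiom P4: monotonicity. -/
def P4 (E : ((ℕ → X) → EReal) → List X → EReal) : Prop :=
  ∀ f g : (ℕ → X) → EReal, (∀ ω, f ω ≤ g ω) → ∀ s : List X, E f s ≤ E g s

/-- Axiom P5. -/
def P5 (E : ((ℕ → X) → EReal) → List X → EReal) : Prop :=
  ∀ (s : List X) (f : (ℕ → X) → EReal) (fs : ℕ → (ℕ → X) → EReal),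
    (∀ n, IsFinitaryGamble (fs n)) → UnifBddBelow fs → PtwLim fs f →
    E f s ≤ limsup (fun n => E (fs n) s) atTop

/-- Axiom P6. -/
def P6 (E : ((ℕ → X) → EReal) → List X → EReal) : Prop :=
  ∀ f : (ℕ → X) → EReal, Vblim f → ∀ s : List X,
    ∃ fs : ℕ → (ℕ → X) → EReal,
      (∀ n, IsNGamble n (fs n)) ∧ UnifBddBelow fs ∧ PtwLim fs f ∧
      limsup (fun n => E (fs n) s) atTop ≤ E f s

/-- Axiom P7. -/
def P7 (E : ((ℕ → X) → EReal) → List X → EReal) : Prop :=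
  ∀ (f : (ℕ → X) → EReal) (s : List X),
    E f s = sInf {y : EReal | ∃ g : (ℕ → X) → EReal,
      Vblim g ∧ (∀ ω, f ω ≤ g ω) ∧ y = E g s}

/-- bundled axioms P1–P5. -/
def P15 (Q : List X → (X → ℝ) → ℝ) (E : ((ℕ → X) → EReal) → List X → EReal) : Prop :=
  P1 Q E ∧ P2 E ∧ P3le E ∧ P4 E ∧ P5 E

/-- `Qe` extends `Q` from gambles to extended-real variables. -/
def ExtendsLocal [Fintype X] (Q : (X → ℝ) → ℝ) (Qe : (X → EReal) → EReal) : Prop :=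
  ∀ f : X → ℝ, Qe (fun x => (f x : EReal)) = ((Q f : ℝ) : EReal)

/-- continuity with respect to upper cuts. -/
def UpperCutCont (Qe : (X → EReal) → EReal) : Prop :=
  ∀ f : X → EReal, (∃ c : ℝ, ∀ x, (c : EReal) ≤ f x) →
    Tendsto (fun c : ℝ => Qe (fun x => min (f x) (c : EReal))) atTop (nhds (Qe f))

/-- continuity with respect to lower cuts. -/
def LowerCutCont (Qe : (X → EReal) → EReal) : Prop :=
  ∀ f : X → EReal,
    Tendsto (fun c : ℝ => Qe (fun x => max (f x) (c : EReal))) atBot (nhds (Qe f))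

/-- `Qe` is the extension of the imprecise probability tree `Q` satisfying
continuity with respect to upper and lower cuts. -/
def LocalExtension [Fintype X] (Q : List X → (X → ℝ) → ℝ)
    (Qe : List X → (X → EReal) → EReal) : Prop :=
  ∀ s : List X, ExtendsLocal (Q s) (Qe s) ∧ UpperCutCont (Qe s) ∧ LowerCutCont (Qe s)

/-- supermartingale with respect to the extended local models `Qe`. -/
def IsSupermart (Qe : List X → (X → EReal) → EReal) (M : List X → EReal) : Prop :=
  ∀ s : List X, Qe s (fun x => M (s ++ [x])) ≤ M s

/-- a bounded-below process. -/
def MBddBelow (M : List X → EReal) : Prop := ∃ c : ℝ, ∀ s : List X, (c : EReal) ≤ M s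

/-- the game-theoretic upper expectation (Shafer–Vovk). -/
noncomputable def EV (Qe : List X → (X → EReal) → EReal)
    (f : (ℕ → X) → EReal) (s : List X) : EReal :=
  sInf {y : EReal | ∃ M : List X → EReal, MBddBelow M ∧ IsSupermart Qe M ∧
    (∀ ω ∈ cyl s, f ω ≤ liminf (fun n => M (pref ω n)) atTop) ∧ y = M s}

/-- a canonical path passing through the situation `s`. -/
noncomputable def extPath [Nonempty X] (s : List X) : ℕ → X :=
  fun i => if h : i < s.length then s.get ⟨i, h⟩ else Classical.arbitrary X

/-- extended-real addition with the convention `(+∞) + (−∞) = (−∞) + (+∞) = +∞`. -/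
noncomputable def eadd (a b : EReal) : EReal := if a = ⊤ ∨ b = ⊤ then ⊤ else a + b

/-- extended-real finite sums with the conventions `0·(±∞) = 0` and
`(+∞) + (−∞) = +∞`. -/
noncomputable def esum {α : Type*} (s : Finset α) (f : α → EReal) : EReal :=
  if ∃ x ∈ s, f x = ⊤ then ⊤ else ∑ x ∈ s, f x

/-- the σ-algebra `ℱ` on paths generated by all cylinder events. -/
def cylSA (X : Type*) : MeasurableSpace (ℕ → X) :=
  MeasurableSpace.generateFrom {A : Set (ℕ → X) | ∃ s : List X, A = cyl s}

/-- a precise probability tree: a probability mass function in every situation. -/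
def IsTree [Fintype X] (p : List X → X → ℝ) : Prop :=
  ∀ s : List X, (∀ x, 0 ≤ p s x) ∧ ∑ x, p s x = 1

/-- the `i`-th entry (0-based) of a list, i.e. the `(i+1)`-th state. -/
noncomputable def nthL [Nonempty X] (z : List X) (i : ℕ) : X :=
  z.getD i (Classical.arbitrary X)

/-- `P` is the family of conditional probability measures on `ℱ` determined by
the precise probability tree `p` via the product formula on cylinder events. -/
def CylProp [Fintype X] [Nonempty X] (p : List X → X → ℝ)
    (P : List X → @Measure (ℕ → X) (cylSA X)) : Prop :=
  ∀ s z : List X,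
    P s (cyl z) =
      if s.length < z.length ∧ z.take s.length = s then
        ∏ i ∈ Finset.Ico s.length z.length, ENNReal.ofReal (p (z.take i) (nthL z i))
      else if z.length ≤ s.length ∧ s.take z.length = z then 1 else 0

/-- the nonnegative part of an extended real, as an `ℝ≥0∞`. -/
noncomputable def toENN (a : EReal) : ℝ≥0∞ := if a = ⊤ then ⊤ else ENNReal.ofReal a.toReal

/-- `∫ f⁺ dP`. -/
noncomputable def lpos (P : @Measure (ℕ → X) (cylSA X)) (f : (ℕ → X) → EReal) : ℝ≥0∞ :=
  @MeasureTheory.lintegral _ (cylSA X) P (fun ω => toENN (f ω))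

/-- `∫ f⁻ dP`. -/
noncomputable def lneg (P : @Measure (ℕ → X) (cylSA X)) (f : (ℕ → X) → EReal) : ℝ≥0∞ :=
  @MeasureTheory.lintegral _ (cylSA X) P (fun ω => toENN (-(f ω)))

/-- the Lebesgue integral `∫ f dP = ∫ f⁺ dP − ∫ f⁻ dP`. -/
noncomputable def emeas (P : @Measure (ℕ → X) (cylSA X)) (f : (ℕ → X) → EReal) : EReal :=
  (lpos P f : EReal) - (lneg P f : EReal)

/-- `ℱ`-measurability of a global variable. -/
def FMeasurable (f : (ℕ → X) → EReal) : Prop := @Measurable _ _ (cylSA X) _ f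

/-- the Lebesgue integral `∫ f dP` exists. -/
def EMeasExists (P : @Measure (ℕ → X) (cylSA X)) (f : (ℕ → X) → EReal) : Prop :=
  FMeasurable f ∧ min (lpos P f) (lneg P f) < ⊤

/-- the upper integral `Ē¹`. -/
noncomputable def upInt1 (P : @Measure (ℕ → X) (cylSA X)) (f : (ℕ → X) → EReal) : EReal :=
  sInf {y : EReal | ∃ g : (ℕ → X) → EReal,
    FMeasurable g ∧ IsBddBelow g ∧ (∀ ω, f ω ≤ g ω) ∧ y = emeas P g}

/-- the upper integral `Ē²`. -/
noncomputable def upInt2 (P : @Measure (ℕ → X) (cylSA X)) (f : (ℕ → X) → EReal) : EReal :=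
  sInf {y : EReal | ∃ g : (ℕ → X) → EReal,
    EMeasExists P g ∧ (∀ ω, f ω ≤ g ω) ∧ y = emeas P g}

/-- the game-theoretic upper expectation with respect to a precise probability tree. -/
noncomputable def EVp [Fintype X] (p : List X → X → ℝ)
    (f : (ℕ → X) → EReal) (s : List X) : EReal :=
  sInf {y : EReal | ∃ M : List X → EReal, MBddBelow M ∧
    (∀ t : List X, ∑ x, ((p t x : ℝ) : EReal) * M (t ++ [x]) ≤ M t) ∧
    (∀ ω ∈ cyl s, f ω ≤ liminf (fun n => M (pref ω n)) atTop) ∧ y = M s}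

/-- the credal set of a coherent upper expectation. -/
def credal [Fintype X] (Q : (X → ℝ) → ℝ) : Set (X → ℝ) :=
  {q | (∀ x, 0 ≤ q x) ∧ (∑ x, q x = 1) ∧ ∀ f : X → ℝ, ∑ x, f x * q x ≤ Q f}

/-- a precise probability tree compatible with the imprecise probability tree `Q`. -/
def Compat [Fintype X] (Q : List X → (X → ℝ) → ℝ) (p : List X → X → ℝ) : Prop :=
  ∀ s : List X, p s ∈ credal (Q s)

/-- the global measure-theoretic upper expectation. -/
noncomputable def Emeas [Fintype X] (Q : List X → (X → ℝ) → ℝ)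
    (P : (List X → X → ℝ) → List X → @Measure (ℕ → X) (cylSA X))
    (f : (ℕ → X) → EReal) (s : List X) : EReal :=
  sSup {y : EReal | ∃ p : List X → X → ℝ, Compat Q p ∧ y = upInt1 (P p s) f}


section StmtThreeAux

lemma pref_length' (ω : ℕ → X) (n : ℕ) : (pref ω n).length = n := by
  simp [pref]

lemma pref_eq_iff {ω₁ ω₂ : ℕ → X} {n : ℕ} :
    pref ω₁ n = pref ω₂ n ↔ ∀ i < n, ω₁ i = ω₂ i := by
  simp only [pref, List.ofFn_inj, funext_iff]
  constructor
  · intro h i hi; exact h ⟨i, hi⟩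
  · intro h i; exact h i i.2

lemma pref_mono' {ω₁ ω₂ : ℕ → X} {m n : ℕ} (h : m ≤ n)
    (hp : pref ω₁ n = pref ω₂ n) : pref ω₁ m = pref ω₂ m := by
  rw [pref_eq_iff] at hp ⊢
  exact fun i hi => hp i (hi.trans_le h)

lemma pref_succ' (ω : ℕ → X) (n : ℕ) : pref ω (n + 1) = pref ω n ++ [ω n] := by
  rw [pref, List.ofFn_succ', List.concat_eq_append]
  rfl

lemma pref_extPath [Nonempty X] (s : List X) : pref (extPath s) s.length = s := by
  apply List.ext_getElem (by simp [pref_length'])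
  intro i h1 h2
  simp only [pref, List.getElem_ofFn, extPath]
  rw [dif_pos h2]
  rfl

lemma coe_toReal_of_bounds {x : EReal} {a b : ℝ} (ha : (a : EReal) ≤ x)
    (hb : x ≤ (b : EReal)) : ((x.toReal : ℝ) : EReal) = x :=
  EReal.coe_toReal (lt_of_le_of_lt hb (EReal.coe_lt_top b)).ne
    (lt_of_lt_of_le (EReal.bot_lt_coe a) ha).ne'

lemma coherent_const [Fintype X] [Nonempty X] {Q : (X → ℝ) → ℝ}
    (hQ : IsCoherent Q) (c : ℝ) : Q (fun _ => c) = c := by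
  obtain ⟨h1, h2, h3⟩ := hQ
  have hle : Q (fun _ => c) ≤ c := (h1 _).trans_eq ciSup_const
  have hneg : Q (fun _ => -c) ≤ -c := (h1 _).trans_eq ciSup_const
  have h0 : Q (fun _ => (0 : ℝ)) = 0 := by
    have := h3 0 le_rfl (fun _ => (0 : ℝ))
    simpa using this
  have hadd := h2 (fun _ => c) (fun _ => -c)
  simp only [add_neg_cancel, h0] at hadd
  linarith

lemma E_section [Fintype X] [Nonempty X] {Q : List X → (X → ℝ) → ℝ}
    {E : ((ℕ → X) → EReal) → List X → EReal}
    (h1 : P1 Q E) (h2 : P2 E)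
    {g : (ℕ → X) → EReal} (hg : IsFinitaryGamble g)
    (h : X → ℝ) (s : List X)
    (hsec : ∀ ω ∈ cyl s, g ω = ((h (ω s.length) : ℝ) : EReal)) :
    E g s = ((Q s h : ℝ) : EReal) := by
  have hfin : IsFinitaryGamble (fun ω => ((h (ω s.length) : ℝ) : EReal)) := by
    refine ⟨⟨s.length + 1, ?_⟩, ?_⟩
    · intro ω₁ ω₂ hp
      have := (pref_eq_iff.mp hp) s.length (Nat.lt_succ_self _)
      simp [this]
    · obtain ⟨a, ha⟩ := Finite.exists_le (fun x => -(h x))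
      obtain ⟨b, hb⟩ := Finite.exists_le h
      refine ⟨-a, b, fun ω => ⟨?_, ?_⟩⟩
      · show ((-a : ℝ) : EReal) ≤ ((h (ω s.length) : ℝ) : EReal)
        exact_mod_cast neg_le.mp (ha _)
      · show ((h (ω s.length) : ℝ) : EReal) ≤ ((b : ℝ) : EReal)
        exact_mod_cast hb _
  have e1 := h2 g hg s
  have e2 := h2 _ hfin s
  have e3 : (fun ω => if ω ∈ cyl s then g ω else 0)
      = (fun ω => if ω ∈ cyl s then ((h (ω s.length) : ℝ) : EReal) else 0) := by
    funext ω
    by_cases hω : ω ∈ cyl s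
    · simp [hω, hsec ω hω]
    · simp [hω]
  rw [e1, e3, ← e2, h1 s h]

lemma E_eq_const_of_long [Fintype X] [Nonempty X] {Q : List X → (X → ℝ) → ℝ}
    {E : ((ℕ → X) → EReal) → List X → EReal}
    (h1 : P1 Q E) (h2 : P2 E) (hQ : ∀ s, IsCoherent (Q s))
    {f : (ℕ → X) → EReal} {m : ℕ} (hm : NMeas m f) {a b : ℝ}
    (hab : ∀ ω, (a : EReal) ≤ f ω ∧ f ω ≤ (b : EReal))
    {s : List X} (hs : m ≤ s.length) :
    E f s = f (extPath s) := by
  set c : ℝ := (f (extPath s)).toReal with hc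
  have hval : ∀ ω ∈ cyl s, f ω = ((c : ℝ) : EReal) := by
    intro ω hω
    have hω' : pref ω s.length = s := hω
    have hpe : pref ω s.length = pref (extPath s) s.length := by
      rw [hω', pref_extPath]
    have : f ω = f (extPath s) := hm ω (extPath s) (pref_mono' hs hpe)
    rw [this, hc, coe_toReal_of_bounds (hab _).1 (hab _).2]
  have := E_section h1 h2 ⟨⟨m, hm⟩, a, b, hab⟩ (fun _ => c) s hval
  rw [this, coherent_const (hQ s) c, hc,
    coe_toReal_of_bounds (hab (extPath s)).1 (hab (extPath s)).2]

lemma E_bdd [Fintype X] [Nonempty X] {Q : List X → (X → ℝ) → ℝ}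
    {E : ((ℕ → X) → EReal) → List X → EReal}
    (h1 : P1 Q E) (h4 : P4 E) (hQ : ∀ s, IsCoherent (Q s))
    {f : (ℕ → X) → EReal} {a b : ℝ}
    (hab : ∀ ω, (a : EReal) ≤ f ω ∧ f ω ≤ (b : EReal)) (s : List X) :
    (a : EReal) ≤ E f s ∧ E f s ≤ (b : EReal) := by
  have hca : E (fun _ => (a : EReal)) s = ((a : ℝ) : EReal) := by
    have := h1 s (fun _ => a)
    rw [coherent_const (hQ s) a] at this
    exact this
  have hcb : E (fun _ => (b : EReal)) s = ((b : ℝ) : EReal) := by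
    have := h1 s (fun _ => b)
    rw [coherent_const (hQ s) b] at this
    exact this
  constructor
  · calc (a : EReal) = E (fun _ => (a : EReal)) s := hca.symm
      _ ≤ E f s := h4 _ _ (fun ω => (hab ω).1) s
  · calc E f s ≤ E (fun _ => (b : EReal)) s := h4 _ _ (fun ω => (hab ω).2) s
      _ = (b : EReal) := hcb

lemma key_stmt3 [Fintype X] [Nonempty X] {Q : List X → (X → ℝ) → ℝ}
    {E E' : ((ℕ → X) → EReal) → List X → EReal}
    (hQ : ∀ s, IsCoherent (Q s)) (hE : P15 Q E) (hEiter : P3eq E) (hE' : P15 Q E') :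
    ∀ (d : ℕ) (f : (ℕ → X) → EReal) (m : ℕ), NMeas m f → IsGambleVal f →
      ∀ s : List X, m ≤ s.length + d → E' f s ≤ E f s := by
  obtain ⟨h1, h2, h3, h4, h5⟩ := hE
  obtain ⟨h1', h2', h3', h4', h5'⟩ := hE'
  intro d
  induction d with
  | zero =>
    rintro f m hm ⟨a, b, hab⟩ s hs
    rw [E_eq_const_of_long h1 h2 hQ hm hab (by simpa using hs),
      E_eq_const_of_long h1' h2' hQ hm hab (by simpa using hs)]
  | succ d ih =>
    intro f m hm hval s hs
    rcases le_or_gt m (s.length + d) with hcase | hcase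
    · exact ih f m hm hval s hcase
    obtain ⟨a, b, hab⟩ := hval
    have hfFG : IsFinitaryGamble f := ⟨⟨m, hm⟩, a, b, hab⟩
    set g : (ℕ → X) → EReal := fun ω' => E f (pref ω' (s.length + 1)) with hgdef
    set g' : (ℕ → X) → EReal := fun ω' => E' f (pref ω' (s.length + 1)) with hg'def
    have hgb : ∀ ω, (a : EReal) ≤ g ω ∧ g ω ≤ (b : EReal) :=
      fun ω => E_bdd h1 h4 hQ hab _
    have hgFG : IsFinitaryGamble g := by
      refine ⟨⟨s.length + 1, fun ω₁ ω₂ hp => ?_⟩, a, b, hgb⟩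
      show E f (pref ω₁ (s.length + 1)) = E f (pref ω₂ (s.length + 1))
      rw [hp]
    set h : X → ℝ := fun x => (E f (s ++ [x])).toReal with hhdef
    have hsec : ∀ ω ∈ cyl s, g ω = ((h (ω s.length) : ℝ) : EReal) := by
      intro ω hω
      have hω' : pref ω s.length = s := hω
      have hp : pref ω (s.length + 1) = s ++ [ω s.length] := by
        rw [pref_succ', hω']
      show E f (pref ω (s.length + 1)) = ((h (ω s.length) : ℝ) : EReal)
      rw [hp]
      exact (coe_toReal_of_bounds (E_bdd h1 h4 hQ hab (s ++ [ω s.length])).1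
        (E_bdd h1 h4 hQ hab (s ++ [ω s.length])).2).symm
    have hEgs : E g s = ((Q s h : ℝ) : EReal) := E_section h1 h2 hgFG h s hsec
    have hE'gs : E' g s = ((Q s h : ℝ) : EReal) := E_section h1' h2' hgFG h s hsec
    have hEf : E f s = E g s := by
      have := hEiter f hfFG s.length (extPath s)
      rwa [pref_extPath] at this
    have step1 : E' f s ≤ E' g' s := by
      have := h3' f hfFG s.length (extPath s)
      rwa [pref_extPath] at this
    have step2 : E' g' s ≤ E' g s := by
      refine h4' g' g (fun ω => ?_) s
      exact ih f m hm ⟨a, b, hab⟩ (pref ω (s.length + 1))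
        (by rw [pref_length']; omega)
    calc E' f s ≤ E' g' s := step1
      _ ≤ E' g s := step2
      _ = E g s := by rw [hE'gs, hEgs]
      _ = E f s := hEf.symm

end StmtThreeAux

theorem stmt3 {X : Type*} [Fintype X] [Nonempty X]
    (Q : List X → (X → ℝ) → ℝ) (hQ : ∀ s, IsCoherent (Q s))
    (E E' : ((ℕ → X) → EReal) → List X → EReal)
    (hE : P15 Q E) (hEiter : P3eq E) (hE6 : P6 E) (hE7 : P7 E)
    (hE' : P15 Q E')
    (f : (ℕ → X) → EReal) (s : List X) :
    E' f s ≤ E f s := by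
  rw [hE7 f s]
  refine le_sInf ?_
  rintro y ⟨g, hg, hfg, rfl⟩
  refine (hE'.2.2.2.1 f g hfg s).trans ?_
  obtain ⟨fs, hfs, hub, hlim, hsup⟩ := hE6 g hg s
  have hFG : ∀ n, IsFinitaryGamble (fs n) := fun n => ⟨⟨n, (hfs n).1⟩, (hfs n).2⟩
  have hstep1 : E' g s ≤ limsup (fun n => E' (fs n) s) atTop :=
    hE'.2.2.2.2 s g fs hFG hub hlim
  have hstep2 : limsup (fun n => E' (fs n) s) atTop
      ≤ limsup (fun n => E (fs n) s) atTop := by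
    refine limsup_le_limsup (Eventually.of_forall fun n => ?_)
    exact key_stmt3 hQ hE hEiter hE' n (fs n) n (hfs n).1 (hfs n).2 s (by omega)
  exact hstep1.trans (hstep2.trans hsup)

end UEP
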